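/- arXiv:0809.0344 — 2 statements merged into one kernel-verified Lean document; each statement's English description precedes it below -/
import Mathlib

section
/- Let R be a commutative ring and M a free R-module of finite rank n ≥ 1. Then the sequence 0 → End_R(M) → D(M) → Der(R) → 0 is exact and split; in particular D(M) ≅ End_R(M) ⊕ Der(R) as R-modules. -/
/-- The module `D(M)` of pairs `(t, φ)` where `t` is a derivation of `R` and
`φ : M → M` is additive with `φ (a • e) = a • φ e + t a • e`. -/
def DM (R : Type*) [CommRing R] (M : Type*) [AddCommGroup M] [Module R M] :
    Submodule R (Derivation ℤ R R × (M →+ M)) where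
  carrier := {p | ∀ (a : R) (e : M), p.2 (a • e) = a • p.2 e + p.1 a • e}
  add_mem' {p q} hp hq a e := by
    simp only [Prod.snd_add, AddMonoidHom.add_apply, hp a e, hq a e,
      Prod.fst_add, Derivation.add_apply, add_smul, smul_add]
    abel
  zero_mem' a e := by simp
  smul_mem' c {p} hp a e := by
    simp only [Prod.smul_snd, AddMonoidHom.smul_apply, hp a e, Prod.smul_fst,
      Derivation.smul_apply, smul_add, smul_smul, mul_comm, smul_eq_mul]

section Aux

variable {R : Type*} [CommRing R] {M : Type*} [AddCommGroup M] [Module R M]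

/-- Inclusion of `End_R(M)` into `D(M)`. -/
def DMi : (M →ₗ[R] M) →ₗ[R] DM R M where
  toFun ψ := ⟨(0, ψ.toAddMonoidHom), fun a e => by simp⟩
  map_add' ψ χ := Subtype.ext (by ext e <;> simp)
  map_smul' c ψ := Subtype.ext (by ext e <;> simp)

/-- Projection from `D(M)` to derivations. -/
def DMp : DM R M →ₗ[R] Derivation ℤ R R :=
  (LinearMap.fst R (Derivation ℤ R R) (M →+ M)).comp (DM R M).subtype

variable {ι : Type*} [Fintype ι] (b : Module.Basis ι R M)

/-- The coordinatewise application of a derivation, as an additive map. -/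
noncomputable def DMphi (t : Derivation ℤ R R) : M →+ M where
  toFun e := ∑ i, t (b.repr e i) • b i
  map_zero' := by simp
  map_add' e f := by simp [map_add, add_smul, Finset.sum_add_distrib]

@[simp] lemma DMphi_apply (t : Derivation ℤ R R) (e : M) :
    DMphi b t e = ∑ i, t (b.repr e i) • b i := rfl

lemma DMphi_mem (t : Derivation ℤ R R) (a : R) (e : M) :
    DMphi b t (a • e) = a • DMphi b t e + t a • e := by
  have h1 : ∀ i, b.repr (a • e) i = a * b.repr e i := fun i => by
    simp [Finsupp.smul_apply]
  calc DMphi b t (a • e)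
      = ∑ i, (a * t (b.repr e i) + b.repr e i * t a) • b i := by
        simp [h1, Derivation.leibniz, smul_eq_mul]
    _ = a • ∑ i, t (b.repr e i) • b i + t a • ∑ i, b.repr e i • b i := by
        simp only [add_smul, Finset.sum_add_distrib, Finset.smul_sum, mul_smul]
        congr 1
        exact Finset.sum_congr rfl fun i _ => smul_comm _ _ _
    _ = a • DMphi b t e + t a • e := by rw [b.sum_repr]; rfl

/-- The splitting: apply the derivation coordinatewise in the basis `b`. -/
noncomputable def DMs : Derivation ℤ R R →ₗ[R] DM R M where
  toFun t := ⟨(t, DMphi b t), DMphi_mem b t⟩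
  map_add' t u := Subtype.ext (by
    refine Prod.ext rfl ?_
    ext e
    simp [add_smul, Finset.sum_add_distrib])
  map_smul' c t := Subtype.ext (by
    refine Prod.ext rfl ?_
    ext e
    simp [Finset.smul_sum, mul_smul])

@[simp] lemma DMs_fst (t : Derivation ℤ R R) :
    ((DMs b t : DM R M) : Derivation ℤ R R × (M →+ M)).1 = t := rfl

@[simp] lemma DMs_snd (t : Derivation ℤ R R) (e : M) :
    ((DMs b t : DM R M) : Derivation ℤ R R × (M →+ M)).2 e
      = ∑ i, t (b.repr e i) • b i := rfl

lemma DM_smul_sum (x : DM R M) (a : R) (e : M) :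
    ∑ i, b.repr e i • ((x : Derivation ℤ R R × (M →+ M)).1 a • b i)
      = (x : Derivation ℤ R R × (M →+ M)).1 a • e := by
  calc ∑ i, b.repr e i • ((x : Derivation ℤ R R × (M →+ M)).1 a • b i)
      = (x : Derivation ℤ R R × (M →+ M)).1 a • ∑ i, b.repr e i • b i := by
        rw [Finset.smul_sum]
        exact Finset.sum_congr rfl fun i _ => smul_comm _ _ _
    _ = _ := by rw [b.sum_repr]

/-- The "linear part" of an element of `D(M)`. -/
noncomputable def DMlin (x : DM R M) : M →ₗ[R] M where
  toFun e := (x : Derivation ℤ R R × (M →+ M)).2 e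
    - ∑ i, (x : Derivation ℤ R R × (M →+ M)).1 (b.repr e i) • b i
  map_add' e f := by
    simp only [map_add, Finsupp.add_apply, add_smul, Finset.sum_add_distrib]
    abel
  map_smul' a e := by
    have hx := x.2 a e
    have h1 : ∀ i, b.repr (a • e) i = a * b.repr e i := fun i => by
      simp [Finsupp.smul_apply]
    simp only [RingHom.id_apply, hx, h1, Derivation.leibniz, smul_eq_mul, add_smul,
      Finset.sum_add_distrib, smul_sub, Finset.smul_sum, mul_smul, DM_smul_sum b x a e]
    abel

@[simp] lemma DMlin_apply (x : DM R M) (e : M) :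
    DMlin b x e = (x : Derivation ℤ R R × (M →+ M)).2 e
      - ∑ i, (x : Derivation ℤ R R × (M →+ M)).1 (b.repr e i) • b i := rfl

/-- The forward map of the splitting equivalence. -/
noncomputable def DMF : DM R M →ₗ[R] (M →ₗ[R] M) × Derivation ℤ R R where
  toFun x := (DMlin b x, (x : Derivation ℤ R R × (M →+ M)).1)
  map_add' x y := by
    refine Prod.ext ?_ rfl
    ext e
    simp only [DMlin_apply, Submodule.coe_add, Prod.fst_add, Prod.snd_add,
      AddMonoidHom.add_apply, Derivation.add_apply, add_smul, Finset.sum_add_distrib,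
      LinearMap.add_apply]
    abel
  map_smul' c x := by
    refine Prod.ext ?_ rfl
    ext e
    simp [smul_sub, Finset.smul_sum, mul_smul]

end Aux

/-- If `M` is a free `R`-module of finite rank `n ≥ 1`, the
sequence `0 → End_R(M) → D(M) → Der(R) → 0` is exact and split; in particular
`D(M) ≅ End_R(M) ⊕ Der(R)` as `R`-modules. -/
theorem stmt11 (R : Type*) [CommRing R] (M : Type*) [AddCommGroup M] [Module R M]
    [Module.Free R M] [Module.Finite R M] (n : ℕ) (hn : 1 ≤ n)
    (hrank : Module.finrank R M = n) :
    ∃ (i : (M →ₗ[R] M) →ₗ[R] DM R M) (p : DM R M →ₗ[R] Derivation ℤ R R),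
      (∀ ψ : M →ₗ[R] M, ((i ψ : Derivation ℤ R R × (M →+ M)) =
        (0, ψ.toAddMonoidHom))) ∧
      (∀ x : DM R M, p x = (x : Derivation ℤ R R × (M →+ M)).1) ∧
      Function.Injective i ∧ Function.Exact i p ∧ Function.Surjective p ∧
      (∃ s : Derivation ℤ R R →ₗ[R] DM R M, p ∘ₗ s = LinearMap.id) ∧
      Nonempty (DM R M ≃ₗ[R] (M →ₗ[R] M) × Derivation ℤ R R) := by
  classical
  let b := Module.Free.chooseBasis R M
  refine ⟨DMi, DMp, fun ψ => rfl, fun x => rfl, ?_, ?_, ?_, ⟨DMs b, rfl⟩, ?_⟩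
  · -- injectivity
    intro ψ χ h
    have h' := congrArg Subtype.val h
    exact LinearMap.ext fun e => congrArg (fun p => p.2 e) h'
  · -- exactness
    intro x
    constructor
    · intro hx
      have h1 : (x : Derivation ℤ R R × (M →+ M)).1 = 0 := hx
      refine ⟨DMlin b x, ?_⟩
      refine Subtype.ext (Prod.ext h1.symm ?_)
      ext e
      simp [DMi, DMlin_apply, h1]
    · rintro ⟨ψ, rfl⟩
      rfl
  · -- surjectivity
    intro t
    exact ⟨DMs b t, rfl⟩
  · -- equivalence
    refine ⟨LinearEquiv.ofLinear (DMF b) (DMi.coprod (DMs b)) ?_ ?_⟩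
    · -- DMF ∘ (i.coprod s) = id
      refine LinearMap.ext fun z => ?_
      obtain ⟨ψ, t⟩ := z
      refine Prod.ext ?_ ?_
      · refine LinearMap.ext fun e => ?_
        simp [DMF, DMi, DMs, DMlin, LinearMap.coprod_apply]
      · simp [DMF, DMi, DMs, LinearMap.coprod_apply]
    · -- (i.coprod s) ∘ DMF = id
      refine LinearMap.ext fun x => Subtype.ext (Prod.ext ?_ ?_)
      · simp [DMF, DMi, DMs, LinearMap.coprod_apply]
      · ext e
        simp [DMF, DMi, DMs, DMlin, LinearMap.coprod_apply]
end

section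
/- Let A be an Artinian local ring with residue field k, and let C• : 0 → M^{-n} → ... → M^{-1} → M^0 → 0 be a bounded complex of finite free A-modules such that the complex C• ⊗_A k has cohomology concentrated in degree 0. Then C• is quasi-isomorphic to a single finite free A-module placed in degree 0. -/
open CategoryTheory CategoryTheory.Limits

instance extendScalarsAdditive {R : Type u₁} {S : Type u₂} [CommRing R]
    [CommRing S] (f : R →+* S) : (ModuleCat.extendScalars.{u₁, u₂, v} f).Additive where
  map_add {M N g h} := by
    apply ModuleCat.hom_ext
    rw [ModuleCat.hom_add]
    apply LinearMap.ext
    intro (x : TensorProduct R ((ModuleCat.restrictScalars f).obj (ModuleCat.of S S)) M)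
    induction x using TensorProduct.induction_on with
    | zero => erw [map_zero]
    | tmul s m =>
        erw [LinearMap.add_apply]
        erw [ModuleCat.ExtendScalars.map_tmul, ModuleCat.ExtendScalars.map_tmul,
          ModuleCat.ExtendScalars.map_tmul]
        show s ⊗ₜ[R] (g m + h m) = s ⊗ₜ[R] g m + s ⊗ₜ[R] h m
        exact TensorProduct.tmul_add _ _ _
    | add x y ihx ihy => erw [map_add, map_add, ihx, ihy]

section coreModule

open TensorProduct Function

variable {R : Type u} [CommRing R] [IsLocalRing R]
variable {M₂ M₁ M₀ : Type u} [AddCommGroup M₂] [AddCommGroup M₁] [AddCommGroup M₀]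
  [Module R M₂] [Module R M₁] [Module R M₀]

local notation "k" => IsLocalRing.ResidueField R

/-- The map induced by `d₁` on the quotient by the image of `d₂`. -/
noncomputable def dbarAux (d₂ : M₂ →ₗ[R] M₁) (d₁ : M₁ →ₗ[R] M₀) (hd : d₁ ∘ₗ d₂ = 0) :
    (M₁ ⧸ LinearMap.range d₂) →ₗ[R] M₀ :=
  (LinearMap.range d₂).liftQ d₁ (by rw [LinearMap.range_le_ker_iff]; exact hd)

omit [IsLocalRing R] in
lemma dbarAux_comp_mkQ (d₂ : M₂ →ₗ[R] M₁) (d₁ : M₁ →ₗ[R] M₀) (hd : d₁ ∘ₗ d₂ = 0) :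
    (dbarAux d₂ d₁ hd) ∘ₗ (LinearMap.range d₂).mkQ = d₁ :=
  Submodule.liftQ_mkQ _ _ _

omit [IsLocalRing R] in
lemma mkQ_comp_leftMap (d₂ : M₂ →ₗ[R] M₁) :
    (LinearMap.range d₂).mkQ ∘ₗ d₂ = 0 := by
  ext z
  simp [Submodule.Quotient.mk_eq_zero]

lemma lTensor_dbarAux_injective (d₂ : M₂ →ₗ[R] M₁) (d₁ : M₁ →ₗ[R] M₀) (hd : d₁ ∘ₗ d₂ = 0)
    (hexact : Function.Exact (LinearMap.lTensor k d₂) (LinearMap.lTensor k d₁)) :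
    Function.Injective (LinearMap.lTensor k (dbarAux d₂ d₁ hd)) := by
  rw [injective_iff_map_eq_zero]
  intro x hx
  obtain ⟨y, rfl⟩ := LinearMap.lTensor_surjective k
    (Submodule.mkQ_surjective (LinearMap.range d₂)) x
  have h1 : LinearMap.lTensor k d₁ y = 0 := by
    rw [← dbarAux_comp_mkQ d₂ d₁ hd, LinearMap.lTensor_comp, LinearMap.comp_apply]
    exact hx
  obtain ⟨z, rfl⟩ := (hexact y).mp h1
  rw [← LinearMap.lTensor_comp_apply, mkQ_comp_leftMap, LinearMap.lTensor_zero]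
  rfl

variable [Module.Finite R M₁] [Module.Finite R M₀] [Module.Free R M₀]

lemma core_exact (d₂ : M₂ →ₗ[R] M₁) (d₁ : M₁ →ₗ[R] M₀) (hd : d₁ ∘ₗ d₂ = 0)
    (hexact : Function.Exact (LinearMap.lTensor k d₂) (LinearMap.lTensor k d₁)) :
    Function.Exact d₂ d₁ := by
  obtain ⟨l', hl'⟩ := (IsLocalRing.split_injective_iff_lTensor_residueField_injective
    (dbarAux d₂ d₁ hd)).mpr (lTensor_dbarAux_injective d₂ d₁ hd hexact)
  have hinj : Function.Injective (dbarAux d₂ d₁ hd) :=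
    Function.HasLeftInverse.injective ⟨l', fun x => DFunLike.congr_fun hl' x⟩
  rw [LinearMap.exact_iff]
  apply le_antisymm
  · intro y hy
    have h0 : (LinearMap.range d₂).mkQ y = 0 := by
      apply hinj
      rw [map_zero]
      exact hy
    rwa [Submodule.mkQ_apply, Submodule.Quotient.mk_eq_zero] at h0
  · rw [LinearMap.range_le_ker_iff]; exact hd

lemma core_free (d₂ : M₂ →ₗ[R] M₁) (d₁ : M₁ →ₗ[R] M₀) (hd : d₁ ∘ₗ d₂ = 0)
    (hexact : Function.Exact (LinearMap.lTensor k d₂) (LinearMap.lTensor k d₁)) :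
    Module.Free R (M₀ ⧸ LinearMap.range d₁) := by
  apply Module.free_of_lTensor_residueField_injective (dbarAux d₂ d₁ hd)
    (LinearMap.range d₁).mkQ (Submodule.mkQ_surjective _) ?_
    (lTensor_dbarAux_injective d₂ d₁ hd hexact)
  rw [LinearMap.exact_iff, Submodule.ker_mkQ]
  exact (Submodule.range_liftQ _ _ _).symm

end coreModule

open Function in
lemma isIso_descOpcycles_aux {R : Type u} [CommRing R] {S : ShortComplex (ModuleCat.{u} R)}
    {T : ModuleCat.{u} R} (τ : S.X₂ ⟶ T) (hτ : S.f ≫ τ = 0)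
    (hsurj : Function.Surjective τ) (hker : ∀ x, τ x = 0 → x ∈ Set.range S.f) :
    IsIso (S.descOpcycles τ hτ) := by
  have hp : Function.Surjective S.pOpcycles :=
    (ModuleCat.epi_iff_surjective _).mp inferInstance
  have hpd : ∀ x, (S.descOpcycles τ hτ) (S.pOpcycles x) = τ x := fun x =>
    ConcreteCategory.congr_hom (S.p_descOpcycles τ hτ) x
  rw [ConcreteCategory.isIso_iff_bijective]
  show Function.Bijective (⇑(S.descOpcycles τ hτ))
  constructor
  · rw [injective_iff_map_eq_zero]
    intro y hy
    obtain ⟨x, rfl⟩ := hp y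
    have hx : τ x = 0 := by rw [← hpd]; exact hy
    obtain ⟨z, rfl⟩ := hker x hx
    exact ConcreteCategory.congr_hom S.f_pOpcycles z
  · intro y
    obtain ⟨x, hx⟩ := hsurj y
    exact ⟨S.pOpcycles x, by rw [hpd, hx]⟩

open TensorProduct in
/-- Over an Artinian local ring `A` with residue field `k`, a
bounded complex `C•` of finite free `A`-modules concentrated in degrees
`[-n, 0]` such that `C• ⊗_A k` has cohomology concentrated in degree `0` is
quasi-isomorphic to a single finite free `A`-module placed in degree `0`. -/
theorem stmt12 (A : Type u) [CommRing A] [IsArtinianRing A] [IsLocalRing A]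
    (Cx : CochainComplex (ModuleCat.{u} A) ℤ)
    (hfree : ∀ i : ℤ, Module.Free A (Cx.X i))
    (hfin : ∀ i : ℤ, Module.Finite A (Cx.X i))
    (n : ℕ) (hbound : ∀ i : ℤ, (0 < i ∨ i < -(n : ℤ)) → IsZero (Cx.X i))
    (hcoh : ∀ i : ℤ, i ≠ 0 → IsZero
      ((((ModuleCat.extendScalars
          (algebraMap A (IsLocalRing.ResidueField A))).mapHomologicalComplex
            (ComplexShape.up ℤ)).obj Cx).homology i)) :
    ∃ P : ModuleCat.{u} A, Module.Free A P ∧ Module.Finite A P ∧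
      ∃ φ : Cx ⟶ (HomologicalComplex.single (ModuleCat A)
          (ComplexShape.up ℤ) 0).obj P, QuasiIso φ := by
  classical
  set k := IsLocalRing.ResidueField A with hk
  -- differentials compose to zero as linear maps
  have hd0 : ∀ i j l : ℤ, (Cx.d j l).hom ∘ₗ (Cx.d i j).hom = 0 :=
    fun i j l => by rw [← ModuleCat.hom_comp, Cx.d_comp_d, ModuleCat.hom_zero]
  -- pointwise comparison of `extendScalars.map` with `lTensor`
  have hmap : ∀ (M N : ModuleCat.{u} A) (l : M ⟶ N) (x : k ⊗[A] M),
      (ModuleCat.extendScalars (algebraMap A k)).map l x = LinearMap.lTensor k l.hom x := by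
    intro M N l x
    induction x using TensorProduct.induction_on with
    | zero => exact (map_zero _).trans (map_zero _).symm
    | tmul s m => rfl
    | add a b ha hb =>
        exact (map_add _ a b).trans ((congrArg₂ (· + ·) ha hb).trans (map_add _ a b).symm)
  -- exactness of the residue-field complex, in linear-map terms
  have hex_lT : ∀ i j l : ℤ, i + 1 = j → j + 1 = l → j ≠ 0 →
      Function.Exact (LinearMap.lTensor k (Cx.d i j).hom)
        (LinearMap.lTensor k (Cx.d j l).hom) := by
    intro i j l hij hjl hj
    have hK : (((ModuleCat.extendScalars (algebraMap A k)).mapHomologicalComplex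
        (ComplexShape.up ℤ)).obj Cx).ExactAt j :=
      (HomologicalComplex.exactAt_iff_isZero_homology _ j).mpr (hcoh j hj)
    rw [HomologicalComplex.exactAt_iff' _ i j l
        (by simp only [CochainComplex.prev]; omega)
        (by simp only [CochainComplex.next]; omega),
      ShortComplex.moduleCat_exact_iff] at hK
    intro y
    constructor
    · intro hy
      obtain ⟨x, hx⟩ := hK y (by
        show (ModuleCat.extendScalars (algebraMap A k)).map (Cx.d j l) y = 0
        rw [hmap]; exact hy)
      refine ⟨x, ?_⟩
      have : (ModuleCat.extendScalars (algebraMap A k)).map (Cx.d i j) x = y := hx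
      erw [hmap] at this
      exact this
    · rintro ⟨x, rfl⟩
      rw [← LinearMap.lTensor_comp_apply, hd0 i j l, LinearMap.lTensor_zero,
        LinearMap.zero_apply]
  -- exactness of the original complex away from 0
  have hCexact : ∀ i : ℤ, i ≠ 0 → Cx.ExactAt i := by
    intro i hi
    haveI := hfin i; haveI := hfin (i + 1); haveI := hfree (i + 1)
    have hex := core_exact (R := A) (Cx.d (i - 1) i).hom (Cx.d i (i + 1)).hom (hd0 _ _ _)
      (hex_lT (i - 1) i (i + 1) (by omega) rfl hi)
    rw [HomologicalComplex.exactAt_iff' _ (i - 1) i (i + 1)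
        (by simp only [CochainComplex.prev])
        (by simp only [CochainComplex.next]),
      ShortComplex.moduleCat_exact_iff]
    intro x hx
    exact (hex x).mp hx
  -- the candidate module
  haveI := hfin (-1 : ℤ); haveI := hfin (0 : ℤ); haveI := hfree (0 : ℤ)
  set d10 : Cx.X (-1) →ₗ[A] Cx.X 0 := (Cx.d (-1) 0).hom with hd10
  set P : ModuleCat.{u} A := ModuleCat.of A ((Cx.X 0) ⧸ LinearMap.range d10) with hP
  have hfreeP : Module.Free A P :=
    core_free (R := A) (Cx.d (-2) (-1)).hom d10 (hd0 _ _ _)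
      (hex_lT (-2) (-1) 0 (by norm_num) (by norm_num) (by norm_num))
  have hfinP : Module.Finite A P :=
    Module.Finite.of_surjective (LinearMap.range d10).mkQ (Submodule.mkQ_surjective _)
  -- the morphism
  set π : Cx.X 0 ⟶ P := ModuleCat.ofHom (LinearMap.range d10).mkQ with hπ
  have hπ0 : ∀ i : ℤ, (ComplexShape.up ℤ).Rel i 0 → Cx.d i 0 ≫ π = 0 := by
    intro i hi
    have hi' : i + 1 = 0 := hi
    have : i = -1 := by omega
    subst this
    apply ModuleCat.hom_ext
    apply LinearMap.ext
    intro x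
    show (LinearMap.range d10).mkQ (d10 x) = 0
    rw [Submodule.mkQ_apply, Submodule.Quotient.mk_eq_zero]
    exact ⟨x, rfl⟩
  refine ⟨P, hfreeP, hfinP, HomologicalComplex.mkHomToSingle π hπ0, ?_⟩
  set φ := HomologicalComplex.mkHomToSingle π hπ0 with hφ
  constructor
  intro i
  by_cases hi : i = 0
  · subst hi
    rw [quasiIsoAt_iff' φ (-1) 0 1 (by simp only [CochainComplex.prev]; norm_num)
      (by simp only [CochainComplex.next]; norm_num)]
    set ψ := (HomologicalComplex.shortComplexFunctor' (ModuleCat A)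
      (ComplexShape.up ℤ) (-1) 0 1).map φ with hψ
    have hg₁ : (Cx.sc' (-1) 0 1).g = 0 :=
      (hbound 1 (by norm_num)).eq_of_tgt _ _
    have hf₂ : (((HomologicalComplex.single (ModuleCat A)
        (ComplexShape.up ℤ) 0).obj P).sc' (-1) 0 1).f = 0 :=
      (HomologicalComplex.isZero_single_obj_X (ComplexShape.up ℤ) 0 P (-1)
        (by norm_num)).eq_of_src _ _
    have hg₂ : (((HomologicalComplex.single (ModuleCat A)
        (ComplexShape.up ℤ) 0).obj P).sc' (-1) 0 1).g = 0 :=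
      (HomologicalComplex.isZero_single_obj_X (ComplexShape.up ℤ) 0 P 1
        (by norm_num)).eq_of_tgt _ _
    rw [ShortComplex.quasiIso_iff_isIso_descOpcycles ψ hg₁ hf₂ hg₂]
    set e := HomologicalComplex.singleObjXSelf (ComplexShape.up ℤ) 0 P with he
    have hτx : ∀ x : Cx.X 0, ψ.τ₂ x = e.inv ((LinearMap.range d10).mkQ x) := by
      intro x
      have : ψ.τ₂ = φ.f 0 := rfl
      rw [this, HomologicalComplex.mkHomToSingle_f π hπ0]
      rfl
    apply isIso_descOpcycles_aux
    · intro y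
      obtain ⟨x, hx⟩ := Submodule.mkQ_surjective (LinearMap.range d10) (e.hom y)
      refine ⟨x, ?_⟩
      rw [hτx, hx]
      exact ConcreteCategory.congr_hom e.hom_inv_id y
    · intro x hx
      erw [hτx] at hx
      have heinj : Function.Injective e.inv := fun a b hab => by
        have h1 := ConcreteCategory.congr_hom e.inv_hom_id a
        have h2 := ConcreteCategory.congr_hom e.inv_hom_id b
        calc a = e.hom (e.inv a) := h1.symm
        _ = e.hom (e.inv b) := by rw [hab]
        _ = b := h2
      have h0 : (LinearMap.range d10).mkQ x = 0 := heinj (by rw [hx, map_zero]; rfl)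
      erw [Submodule.mkQ_apply, Submodule.Quotient.mk_eq_zero] at h0
      exact h0
  · exact (quasiIsoAt_iff_exactAt' φ i
      (HomologicalComplex.exactAt_single_obj _ _ _ _ hi)).mpr (hCexact i hi)
end
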